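/- For every $r$ with $0 < r \leq \frac{\log 3}{2}$, one has $e^{\pi\sqrt{3} - \pi/\sinh(r)} \leq 3\sinh^2(r)$, with equality at $r = \frac{\log 3}{2}$ (where $\sinh(\frac{\log 3}{2}) = \frac{1}{\sqrt 3}$). Equivalently, the function $F(r) = \frac{e^{\pi\sqrt 3}\, C\big(\frac{\log 3}{2}\big)\, e^{-\pi/\sinh(r)}}{3\sinh^2(r)}$ satisfies $F(r) \leq C\big(\frac{\log 3}{2}\big)$ for all $0 < r \leq \frac{\log 3}{2}$. -/

import Mathlib

open Real

/-- Teo's function `C(r) = ((4π/3)(1 - sech⁶(r/2)))^{-1/2}`. -/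
noncomputable def TeoC (r : ℝ) : ℝ :=
  (Real.sqrt (4 * π / 3 * (1 - (1 / Real.cosh (r / 2)) ^ 6)))⁻¹

/-- The collar bound from Part (3) of Proposition 3.3. -/
noncomputable def F (r : ℝ) : ℝ :=
  Real.exp (π * Real.sqrt 3) * TeoC (Real.log 3 / 2) * Real.exp (-π / Real.sinh r)
    / (3 * Real.sinh r ^ 2)

lemma sinh_log3_half : Real.sinh (Real.log 3 / 2) = (Real.sqrt 3)⁻¹ := by
  have h3 : Real.sqrt 3 ^ 2 = 3 := Real.sq_sqrt (by norm_num)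
  have hs3 : (0:ℝ) < Real.sqrt 3 := Real.sqrt_pos.2 (by norm_num)
  have h1 : Real.exp (Real.log 3 / 2) = Real.sqrt 3 := by
    rw [Real.sqrt_eq_rpow, Real.rpow_def_of_pos (by norm_num : (0:ℝ) < 3)]
    ring_nf
  have h2 : Real.exp (-(Real.log 3 / 2)) = (Real.sqrt 3)⁻¹ := by
    rw [Real.exp_neg, h1]
  rw [Real.sinh_eq, h1, h2]
  field_simp
  nlinarith [h3, hs3]

lemma key_ineq (s : ℝ) (hs : 0 < s) (hs3 : Real.sqrt 3 * s ≤ 1) :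
    Real.exp (π * Real.sqrt 3 - π / s) ≤ 3 * s ^ 2 := by
  have h3 : Real.sqrt 3 ^ 2 = 3 := Real.sq_sqrt (by norm_num)
  have hsq3 : (1:ℝ) ≤ Real.sqrt 3 := by nlinarith [Real.sqrt_nonneg 3]
  have hpi : (3:ℝ) < π := Real.pi_gt_three
  set t := π / s - π * Real.sqrt 3 with ht
  clear_value t
  have hst : s * t = π - π * Real.sqrt 3 * s := by
    rw [ht]; field_simp
  have ht0 : 0 ≤ t := by
    have : π * Real.sqrt 3 * s ≤ π := by nlinarith
    nlinarith
  have hexp : (1 + t / 2) ^ 2 ≤ Real.exp t := by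
    have h := Real.add_one_le_exp (t / 2)
    have h2 : Real.exp (t / 2) * Real.exp (t / 2) = Real.exp t := by
      rw [← Real.exp_add]; ring_nf
    have h5 := mul_le_mul h h (by linarith) (Real.exp_pos (t / 2)).le
    nlinarith [h5, h2]
  have step : 1 ≤ Real.sqrt 3 * s * (1 + t / 2) := by
    have hprod : 0 ≤ (1 - Real.sqrt 3 * s) * (Real.sqrt 3 * π / 2 - 1) := by
      apply mul_nonneg <;> nlinarith
    have h4 : Real.sqrt 3 * (s * t) = Real.sqrt 3 * π - 3 * π * s := by
      rw [hst]; linear_combination (-(π * s)) * h3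
    have hexpand : (1 - Real.sqrt 3 * s) * (Real.sqrt 3 * π / 2 - 1)
        = Real.sqrt 3 * π / 2 - 1 + Real.sqrt 3 * s - 3 * π * s / 2 := by
      linear_combination (-(π * s / 2)) * h3
    rw [hexpand] at hprod
    nlinarith [hprod, h4]
  have key2 : 1 ≤ 3 * s ^ 2 * (1 + t / 2) ^ 2 := by
    nlinarith [step, h3, mul_le_mul step step (by linarith) (by positivity)]
  have hE : Real.exp (π * Real.sqrt 3 - π / s) = (Real.exp t)⁻¹ := by
    rw [← Real.exp_neg, ht]; ring_nf
  rw [hE, inv_eq_one_div, div_le_iff₀ (Real.exp_pos t)]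
  nlinarith [key2, hexp, sq_nonneg s]

/-- For `0 < r ≤ (log 3)/2` one has `e^{π√3 - π/sinh r} ≤ 3 sinh² r`, with equality
at `r = (log 3)/2`; equivalently `F(r) ≤ C((log 3)/2)` on this interval. -/
theorem F_le_TeoC :
    (∀ r : ℝ, 0 < r → r ≤ Real.log 3 / 2 →
      Real.exp (π * Real.sqrt 3 - π / Real.sinh r) ≤ 3 * Real.sinh r ^ 2) ∧
    Real.exp (π * Real.sqrt 3 - π / Real.sinh (Real.log 3 / 2))
      = 3 * Real.sinh (Real.log 3 / 2) ^ 2 ∧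
    ∀ r : ℝ, 0 < r → r ≤ Real.log 3 / 2 → F r ≤ TeoC (Real.log 3 / 2) := by
  have h3 : Real.sqrt 3 ^ 2 = 3 := Real.sq_sqrt (by norm_num)
  have hs3 : (0:ℝ) < Real.sqrt 3 := Real.sqrt_pos.2 (by norm_num)
  have main : ∀ r : ℝ, 0 < r → r ≤ Real.log 3 / 2 →
      Real.exp (π * Real.sqrt 3 - π / Real.sinh r) ≤ 3 * Real.sinh r ^ 2 := by
    intro r hr hr2
    have hsinh : 0 < Real.sinh r := Real.sinh_pos_iff.2 hr
    have hle : Real.sinh r ≤ (Real.sqrt 3)⁻¹ := by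
      rw [← sinh_log3_half]
      exact Real.sinh_le_sinh.2 hr2
    apply key_ineq _ hsinh
    calc Real.sqrt 3 * Real.sinh r ≤ Real.sqrt 3 * (Real.sqrt 3)⁻¹ := by
          exact mul_le_mul_of_nonneg_left hle hs3.le
      _ = 1 := mul_inv_cancel₀ hs3.ne'
  refine ⟨main, ?_, ?_⟩
  · rw [sinh_log3_half]
    have h1 : π / (Real.sqrt 3)⁻¹ = π * Real.sqrt 3 := by
      field_simp
    rw [h1, sub_self, Real.exp_zero]
    field_simp
    exact h3
  · intro r hr hr2
    have h := main r hr hr2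
    have hsinh : 0 < Real.sinh r := Real.sinh_pos_iff.2 hr
    have hC : 0 ≤ TeoC (Real.log 3 / 2) := by
      unfold TeoC
      positivity
    have hden : 0 < 3 * Real.sinh r ^ 2 := by positivity
    rw [F, div_le_iff₀ hden]
    have hE : Real.exp (π * Real.sqrt 3) * Real.exp (-π / Real.sinh r)
        = Real.exp (π * Real.sqrt 3 - π / Real.sinh r) := by
      rw [← Real.exp_add]; ring_nf
    calc Real.exp (π * Real.sqrt 3) * TeoC (Real.log 3 / 2) * Real.exp (-π / Real.sinh r)
        = TeoC (Real.log 3 / 2) * Real.exp (π * Real.sqrt 3 - π / Real.sinh r) := by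
          rw [← hE]; ring
      _ ≤ TeoC (Real.log 3 / 2) * (3 * Real.sinh r ^ 2) := by
          exact mul_le_mul_of_nonneg_left h hC
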